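/- For every integer N ≥ 1, define h : (0,1) → ℝ by h(p) = ∑_{k1=0}^{N} ∑_{k2=1}^{N-k1} 2^{k2} · (k2/(2k1 + k2)) · (N!/(k1! k2! (N-k1-k2)!)) · ((1-p)/p)^{2k1 + k2}. Then for every p ∈ (0,1), h is differentiable at p with derivative h'(p) = -2N/p^{2N}. -/

import Mathlib

open Finset

/-- The function `h` from the proof of the expected-value formula. -/
noncomputable def h (N : ℕ) (p : ℝ) : ℝ :=
  ∑ k1 ∈ Finset.range (N + 1), ∑ k2 ∈ Finset.Icc 1 (N - k1),
    (2 : ℝ) ^ k2 * ((k2 : ℝ) / (2 * k1 + k2)) *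
      ((N.factorial : ℝ) / (k1.factorial * k2.factorial * (N - k1 - k2).factorial)) *
      ((1 - p) / p) ^ (2 * k1 + k2)


lemma choose_fact (M k j : ℕ) (hk : k ≤ M) (hj : j ≤ M - k) :
    ((M.factorial : ℝ) / (k.factorial * j.factorial * (M - k - j).factorial))
      = (M.choose k) * ((M - k).choose j) := by
  have h1 : M.choose k * k.factorial * (M - k).factorial = M.factorial :=
    Nat.choose_mul_factorial_mul_factorial hk
  have h2 : (M - k).choose j * j.factorial * (M - k - j).factorial = (M - k).factorial :=
    Nat.choose_mul_factorial_mul_factorial hj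
  have hM : M.factorial = M.choose k * (M - k).choose j *
      (k.factorial * j.factorial * (M - k - j).factorial) := by
    rw [← h1, ← h2]; ring
  have d1 : (k.factorial : ℝ) ≠ 0 := Nat.cast_ne_zero.mpr k.factorial_ne_zero
  have d2 : (j.factorial : ℝ) ≠ 0 := Nat.cast_ne_zero.mpr j.factorial_ne_zero
  have d3 : ((M - k - j).factorial : ℝ) ≠ 0 := Nat.cast_ne_zero.mpr (M - k - j).factorial_ne_zero
  rw [hM]
  push_cast
  field_simp

lemma key (M : ℕ) (x : ℝ) :
    ∑ k1 ∈ range (M + 1), ∑ k2 ∈ range (M - k1 + 1),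
      (2 : ℝ) ^ k2 * ((M.factorial : ℝ) / (k1.factorial * k2.factorial * (M - k1 - k2).factorial))
        * x ^ (2 * k1 + k2)
    = (1 + x) ^ (2 * M) := by
  have h0 : (1 + x) ^ (2 * M) = (x ^ 2 + (2 * x + 1)) ^ M := by
    rw [pow_mul]; ring_nf
  rw [h0, add_pow]
  refine Finset.sum_congr rfl fun k1 hk1 => ?_
  have hk1' : k1 ≤ M := Nat.lt_succ_iff.mp (mem_range.mp hk1)
  rw [add_pow, Finset.mul_sum, Finset.sum_mul]
  refine Finset.sum_congr rfl fun k2 hk2 => ?_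
  have hk2' : k2 ≤ M - k1 := Nat.lt_succ_iff.mp (mem_range.mp hk2)
  rw [choose_fact M k1 k2 hk1' hk2', pow_add, pow_mul, mul_pow]
  ring

lemma dsum (N : ℕ) (hN : 1 ≤ N) (x : ℝ) :
    ∑ k1 ∈ range (N + 1), ∑ k2 ∈ Icc 1 (N - k1),
      (k2 : ℝ) * 2 ^ k2 *
        ((N.factorial : ℝ) / (k1.factorial * k2.factorial * (N - k1 - k2).factorial))
        * x ^ (2 * k1 + k2 - 1)
    = 2 * N * (1 + x) ^ (2 * N - 2) := by
  rw [Finset.sum_range_succ]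
  have hlast : Icc 1 (N - N) = ∅ := by simp
  rw [hlast, Finset.sum_empty, add_zero]
  have hstep : ∀ k1 ∈ range N,
      ∑ k2 ∈ Icc 1 (N - k1),
        (k2 : ℝ) * 2 ^ k2 *
          ((N.factorial : ℝ) / (k1.factorial * k2.factorial * (N - k1 - k2).factorial))
          * x ^ (2 * k1 + k2 - 1)
      = 2 * N * ∑ j ∈ range ((N - 1) - k1 + 1),
          (2 : ℝ) ^ j *
            (((N - 1).factorial : ℝ) /
              (k1.factorial * j.factorial * ((N - 1) - k1 - j).factorial))
            * x ^ (2 * k1 + j) := by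
    intro k1 hk1
    have hk1' : k1 ≤ N - 1 := by
      have := mem_range.mp hk1; omega
    rw [← Finset.Ico_add_one_right_eq_Icc, Finset.sum_Ico_eq_sum_range, Finset.mul_sum]
    have hrange : N - k1 + 1 - 1 = (N - 1) - k1 + 1 := by omega
    rw [hrange]
    refine Finset.sum_congr rfl fun j hj => ?_
    have hj' : j ≤ (N - 1) - k1 := Nat.lt_succ_iff.mp (mem_range.mp hj)
    have e1 : 2 * k1 + (1 + j) - 1 = 2 * k1 + j := by omega
    have e2 : N - k1 - (1 + j) = (N - 1) - k1 - j := by omega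
    have e3 : (1 + j).factorial = (1 + j) * j.factorial := by
      rw [add_comm]; exact Nat.factorial_succ j
    have e4 : N.factorial = N * (N - 1).factorial := by
      rw [← Nat.succ_pred_eq_of_pos (by omega : 0 < N)]
      simp [Nat.factorial_succ]
    rw [e1, e2, e3, e4]
    have d1 : (k1.factorial : ℝ) ≠ 0 := Nat.cast_ne_zero.mpr k1.factorial_ne_zero
    have d2 : (j.factorial : ℝ) ≠ 0 := Nat.cast_ne_zero.mpr j.factorial_ne_zero
    have d3 : (((N - 1) - k1 - j).factorial : ℝ) ≠ 0 :=
      Nat.cast_ne_zero.mpr ((N - 1) - k1 - j).factorial_ne_zero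
    have d4 : (1 : ℝ) + j ≠ 0 := by positivity
    push_cast
    rw [pow_add, pow_one]
    field_simp
  rw [Finset.sum_congr rfl hstep, ← Finset.mul_sum]
  have hN' : N - 1 + 1 = N := by omega
  have := key (N - 1) x
  rw [hN'] at this
  rw [this]
  have e : 2 * (N - 1) = 2 * N - 2 := by omega
  rw [e]

theorem derivative_of_h (N : ℕ) (hN : 1 ≤ N) (p : ℝ) (hp : p ∈ Set.Ioo (0 : ℝ) 1) :
    HasDerivAt (h N) (-(2 * (N : ℝ)) / p ^ (2 * N)) p := by
  obtain ⟨hp0, hp1⟩ := hp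
  have hpne : p ≠ 0 := ne_of_gt hp0
  set x : ℝ := (1 - p) / p with hxdef
  have hx : HasDerivAt (fun q : ℝ => (1 - q) / q) (-1 / p ^ 2) p := by
    have h1 : HasDerivAt (fun q : ℝ => 1 - q) (-1) p := by
      simpa using (hasDerivAt_id p).const_sub 1
    have h2 := h1.fun_div (hasDerivAt_id p) hpne
    refine h2.congr_deriv ?_
    simp only [id]
    ring
  have hsum : HasDerivAt (h N)
      (∑ k1 ∈ range (N + 1), ∑ k2 ∈ Icc 1 (N - k1),
        (2 : ℝ) ^ k2 * ((k2 : ℝ) / (2 * k1 + k2)) *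
          ((N.factorial : ℝ) / (k1.factorial * k2.factorial * (N - k1 - k2).factorial)) *
          ((2 * k1 + k2 : ℕ) * x ^ (2 * k1 + k2 - 1) * (-1 / p ^ 2))) p := by
    unfold h
    apply HasDerivAt.fun_sum
    intro k1 _
    apply HasDerivAt.fun_sum
    intro k2 _
    exact (hx.pow (2 * k1 + k2)).const_mul _
  convert hsum using 1
  have hterm : ∀ k1 ∈ range (N + 1), ∀ k2 ∈ Icc 1 (N - k1),
      (2 : ℝ) ^ k2 * ((k2 : ℝ) / (2 * k1 + k2)) *
        ((N.factorial : ℝ) / (k1.factorial * k2.factorial * (N - k1 - k2).factorial)) *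
        ((2 * k1 + k2 : ℕ) * x ^ (2 * k1 + k2 - 1) * (-1 / p ^ 2))
      = (-1 / p ^ 2) * ((k2 : ℝ) * 2 ^ k2 *
          ((N.factorial : ℝ) / (k1.factorial * k2.factorial * (N - k1 - k2).factorial)) *
          x ^ (2 * k1 + k2 - 1)) := by
    intro k1 _ k2 hk2
    have hk2' : 1 ≤ k2 := (mem_Icc.mp hk2).1
    have hm : ((2 * k1 + k2 : ℕ) : ℝ) ≠ 0 := Nat.cast_ne_zero.mpr (by omega)
    push_cast
    field_simp
  have : ∑ k1 ∈ range (N + 1), ∑ k2 ∈ Icc 1 (N - k1),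
        (2 : ℝ) ^ k2 * ((k2 : ℝ) / (2 * k1 + k2)) *
          ((N.factorial : ℝ) / (k1.factorial * k2.factorial * (N - k1 - k2).factorial)) *
          ((2 * k1 + k2 : ℕ) * x ^ (2 * k1 + k2 - 1) * (-1 / p ^ 2))
      = (-1 / p ^ 2) * ∑ k1 ∈ range (N + 1), ∑ k2 ∈ Icc 1 (N - k1),
          (k2 : ℝ) * 2 ^ k2 *
            ((N.factorial : ℝ) / (k1.factorial * k2.factorial * (N - k1 - k2).factorial)) *
            x ^ (2 * k1 + k2 - 1) := by
    rw [Finset.mul_sum]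
    refine Finset.sum_congr rfl fun k1 hk1 => ?_
    rw [Finset.mul_sum]
    exact Finset.sum_congr rfl fun k2 hk2 => hterm k1 hk1 k2 hk2
  rw [this, dsum N hN x]
  have hx1 : 1 + x = 1 / p := by
    rw [hxdef]; field_simp; ring
  rw [hx1, div_pow, one_pow]
  have hp2 : p ^ 2 * p ^ (2 * N - 2) = p ^ (2 * N) := by
    rw [← pow_add]
    congr 1
    omega
  rw [← hp2]
  field_simp
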